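/- Let (λ_i)_{i≥0} be a sequence of real numbers and let T : ℝ[x] → ℝ[x] be the diagonal linear operator determined by T(x^i) = λ_i·x^i for all i ≥ 0. If T preserves the set of positive polynomials (for every p with p(x) > 0 for all real x, also (T(p))(x) > 0 for all real x), then: (1) λ_i ≥ 0 for every even i; and (2) λ_i² ≤ λ_0·λ_{2i} for every i ≥ 0. -/

import Mathlib

open Polynomial

theorem stmt_10 (lam : ℕ → ℝ) (T : Polynomial ℝ →ₗ[ℝ] Polynomial ℝ)
    (hT : ∀ i : ℕ, T (Polynomial.X ^ i) = lam i • Polynomial.X ^ i)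
    (hpres : ∀ p : Polynomial ℝ, (∀ x : ℝ, 0 < p.eval x) → ∀ x : ℝ, 0 < (T p).eval x) :
    (∀ i : ℕ, Even i → 0 ≤ lam i) ∧ (∀ i : ℕ, (lam i) ^ 2 ≤ lam 0 * lam (2 * i)) := by
  have h1 : (X ^ 0 : ℝ[X]) = 1 := pow_zero X
  have hT0 : T (1 : ℝ[X]) = lam 0 • 1 := by rw [← h1, hT 0, h1]
  have hlam0 : 0 < lam 0 := by
    have h := hpres 1 (by intro x; simp) 1
    rw [← h1, hT 0] at h
    simpa using h
  constructor
  · intro i hi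
    by_contra hneg
    push_neg at hneg
    set ε : ℝ := -lam i / lam 0 with hε
    have hεpos : 0 < ε := by
      apply div_pos (by linarith) hlam0
    have hp : ∀ x : ℝ, 0 < (X ^ i + ε • (1 : ℝ[X])).eval x := by
      intro x
      have hx : 0 ≤ x ^ i := hi.pow_nonneg x
      simp only [eval_add, eval_pow, eval_X, eval_smul, eval_one, smul_eq_mul, mul_one]
      linarith
    have h := hpres _ hp 1
    rw [map_add, map_smul, hT i, hT0] at h
    simp only [eval_add, eval_smul, eval_pow, eval_X, eval_one, one_pow, smul_eq_mul,
      mul_one] at h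
    have : ε * lam 0 = -lam i := by
      rw [hε, div_mul_cancel₀ _ hlam0.ne']
    linarith
  · intro i
    have key : ∀ c : ℝ, 0 ≤ lam 0 * c ^ 2 + (2 * lam i) * c + lam (2 * i) := by
      intro c
      by_contra hS
      push_neg at hS
      set S : ℝ := lam 0 * c ^ 2 + (2 * lam i) * c + lam (2 * i) with hSdef
      set ε : ℝ := -S / lam 0 with hε
      have hεpos : 0 < ε := div_pos (by linarith) hlam0
      have hp : ∀ x : ℝ, 0 < (X ^ (2 * i) + (2 * c) • X ^ i + (c ^ 2 + ε) • (1 : ℝ[X])).eval x := by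
        intro x
        have hx : x ^ (2 * i) = (x ^ i) ^ 2 := by
          rw [two_mul, pow_add, sq]
        simp only [eval_add, eval_pow, eval_X, eval_smul, eval_one, smul_eq_mul, mul_one, hx]
        nlinarith [sq_nonneg (x ^ i + c)]
      have h := hpres _ hp 1
      rw [map_add, map_add, map_smul, map_smul, hT i, hT (2 * i), hT0] at h
      simp only [eval_add, eval_smul, eval_pow, eval_X, eval_one, one_pow, smul_eq_mul,
        mul_one] at h
      have hεl : ε * lam 0 = -S := by
        rw [hε, div_mul_cancel₀ _ hlam0.ne']
      have : S + ε * lam 0 > 0 := by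
        rw [hSdef]; ring_nf; ring_nf at h; linarith
      linarith
    have key' : ∀ x : ℝ, 0 ≤ lam 0 * (x * x) + (2 * lam i) * x + lam (2 * i) := by
      intro x
      simpa [pow_two] using key x
    have hd := discrim_le_zero key'
    rw [discrim] at hd
    nlinarith [hd]
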